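/- Let r > 1/2 and let (s_k)_{k≥1} be a sequence of positive reals with c₁ k^{−2r} ≤ s_k ≤ c₂ k^{−2r} for all k ≥ 1, for some constants 0 < c₁ ≤ c₂. Then there exist constants 0 < C₁ ≤ C₂ < ∞ such that for all λ ∈ (0,1], C₁ λ^{−1/(2r)} ≤ Σ_{k=1}^∞ s_k/(λ + s_k) ≤ C₂ λ^{−1/(2r)}. -/

import Mathlib

set_option maxHeartbeats 1000000


lemma tr_aux1 {q x : ℝ} (hq : 0 < q) (hx : 0 < x) :
    q * (x + 1) ^ (-(q + 1)) ≤ x ^ (-q) - (x + 1) ^ (-q) := by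
  have hx1 : (0:ℝ) < x + 1 := by linarith
  have ht : (0:ℝ) < x / (x + 1) := div_pos hx hx1
  have hu : (0:ℝ) < (x + 1) / x := div_pos hx1 hx
  have hlog : 1 / (x + 1) ≤ Real.log ((x + 1) / x) := by
    have h := Real.log_le_sub_one_of_pos ht
    have h2 : Real.log ((x + 1) / x) = - Real.log (x / (x + 1)) := by
      rw [← Real.log_inv]; congr 1; field_simp
    have h3 : x / (x + 1) - 1 = -(1 / (x + 1)) := by field_simp; ring
    rw [h2]; linarith [h.trans_eq h3]
  have key : 1 + q * (1 / (x + 1)) ≤ ((x + 1) / x) ^ q := by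
    rw [Real.rpow_def_of_pos hu]
    have h2 : q * (1 / (x + 1)) ≤ q * Real.log ((x + 1) / x) :=
      mul_le_mul_of_nonneg_left hlog hq.le
    have h3 := Real.add_one_le_exp (Real.log ((x + 1) / x) * q)
    nlinarith
  have hX : (0:ℝ) < x ^ q := Real.rpow_pos_of_pos hx q
  have hY : (0:ℝ) < (x + 1) ^ q := Real.rpow_pos_of_pos hx1 q
  have hdiv : ((x + 1) / x) ^ q = (x + 1) ^ q / x ^ q :=
    Real.div_rpow hx1.le hx.le q
  have key2 : x ^ q * (x + 1) + q * x ^ q ≤ (x + 1) ^ q * (x + 1) := by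
    rw [hdiv, le_div_iff₀ hX] at key
    have k3 := mul_le_mul_of_nonneg_right key hx1.le
    have hone : 1 / (x + 1) * (x + 1) = 1 := by field_simp
    have h4 : q * x ^ q * (1 / (x + 1) * (x + 1)) = q * x ^ q := by rw [hone, mul_one]
    nlinarith [k3, h4]
  have e1 : x ^ (-q) = (x ^ q)⁻¹ := by rw [Real.rpow_neg hx.le]
  have e2 : (x + 1) ^ (-q) = ((x + 1) ^ q)⁻¹ := by rw [Real.rpow_neg hx1.le]
  have e3 : (x + 1) ^ (-(q + 1)) = ((x + 1) ^ q * (x + 1))⁻¹ := by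
    rw [Real.rpow_neg hx1.le, Real.rpow_add hx1, Real.rpow_one]
  rw [e1, e2, e3]
  rw [inv_eq_one_div, inv_eq_one_div, inv_eq_one_div, mul_one_div, div_sub_div _ _ hX.ne' hY.ne',
    div_le_div_iff₀ (by positivity) (by positivity)]
  nlinarith [mul_le_mul_of_nonneg_left key2 hY.le]

lemma tr_aux2 {q : ℝ} (hq : 0 < q) (N : ℕ) (hN : 1 ≤ N) :
    ∑' k : ℕ, ((k : ℝ) + N + 1) ^ (-(q + 1)) ≤ (N : ℝ) ^ (-q) / q := by
  have hNpos : (0:ℝ) < N := by exact_mod_cast hN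
  apply Real.tsum_le_of_sum_range_le
  · intro n; positivity
  · intro n
    have hterm : ∀ i ∈ Finset.range n,
        ((i : ℝ) + N + 1) ^ (-(q + 1)) ≤
          (1 / q) * (((i : ℝ) + N) ^ (-q) - (((i + 1 : ℕ) : ℝ) + N) ^ (-q)) := by
      intro i _
      have hx : (0:ℝ) < (i : ℝ) + N := by positivity
      have h := tr_aux1 hq hx
      have hcast : ((i + 1 : ℕ) : ℝ) + N = ((i : ℝ) + N) + 1 := by push_cast; ring
      rw [hcast]
      rw [one_div, inv_mul_eq_div, le_div_iff₀ hq, mul_comm]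
      linarith
    calc ∑ i ∈ Finset.range n, ((i : ℝ) + N + 1) ^ (-(q + 1))
        ≤ ∑ i ∈ Finset.range n,
            (1 / q) * (((i : ℝ) + N) ^ (-q) - (((i + 1 : ℕ) : ℝ) + N) ^ (-q)) :=
          Finset.sum_le_sum hterm
      _ = (1 / q) * (((0 : ℝ) + N) ^ (-q) - ((n : ℝ) + N) ^ (-q)) := by
          rw [← Finset.mul_sum, Finset.sum_range_sub' (fun i => ((i : ℝ) + N) ^ (-q)) n]
          norm_num
      _ ≤ (N : ℝ) ^ (-q) / q := by
          have h1 : (0:ℝ) ≤ ((n : ℝ) + N) ^ (-q) := by positivity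
          rw [zero_add, one_div, inv_mul_eq_div]
          apply div_le_div_of_nonneg_right ?_ hq.le
          linarith


/-- If `s_k ≍ k^{−2r}` with `r > 1/2` (here `s k` stands for `s_{k+1}`), then the trace
quantity `Σ_k s_k/(λ + s_k)` is of exact order `λ^{−1/(2r)}` for `λ ∈ (0,1]`. -/
theorem trace_order_polynomial_decay (r : ℝ) (hr : 1 / 2 < r) (s : ℕ → ℝ)
    (c₁ c₂ : ℝ) (hc₁ : 0 < c₁) (hc : c₁ ≤ c₂)
    (hs : ∀ k : ℕ, c₁ * ((k : ℝ) + 1) ^ (-(2 * r)) ≤ s k ∧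
                   s k ≤ c₂ * ((k : ℝ) + 1) ^ (-(2 * r))) :
    ∃ C₁ C₂ : ℝ, 0 < C₁ ∧ C₁ ≤ C₂ ∧
      ∀ l : ℝ, 0 < l → l ≤ 1 →
        C₁ * l ^ (-(1 / (2 * r))) ≤ (∑' k, s k / (l + s k)) ∧
        (∑' k, s k / (l + s k)) ≤ C₂ * l ^ (-(1 / (2 * r))) := by
  set q : ℝ := 2 * r - 1 with hqdef
  have hq : 0 < q := by simp [hqdef]; linarith
  have h2r : (0:ℝ) < 2 * r := by linarith
  have hc₂ : 0 < c₂ := hc₁.trans_le hc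
  refine ⟨c₁ / (2 * (1 + c₁)), 1 + c₂ * 2 ^ q / q, by positivity, ?_, ?_⟩
  · have h1 : c₁ / (2 * (1 + c₁)) ≤ 1 := by
      rw [div_le_one (by positivity)]; linarith
    have h2 : 0 ≤ c₂ * 2 ^ q / q := by positivity
    linarith
  intro l hl0 hl1
  -- basic facts
  have hspos : ∀ k : ℕ, 0 < s k := fun k =>
    lt_of_lt_of_le (by positivity) (hs k).1
  have hden : ∀ k : ℕ, 0 < l + s k := fun k => by have := hspos k; linarith
  have hfnn : ∀ k : ℕ, 0 ≤ s k / (l + s k) := fun k =>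
    le_of_lt (div_pos (hspos k) (hden k))
  have hfle1 : ∀ k : ℕ, s k / (l + s k) ≤ 1 := fun k => by
    rw [div_le_one (hden k)]; linarith
  -- summability
  have hbase : Summable (fun k : ℕ => ((k : ℝ) + 1) ^ (-(2 * r))) := by
    have h1 : Summable (fun n : ℕ => (n : ℝ) ^ (-(2 * r))) :=
      Real.summable_nat_rpow.2 (by linarith)
    have h2 := (summable_nat_add_iff 1).2 h1
    exact h2.congr fun n => by push_cast; ring_nf
  have hfle : ∀ k : ℕ, s k / (l + s k) ≤ c₂ / l * ((k : ℝ) + 1) ^ (-(2 * r)) := by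
    intro k
    have h1 : s k / (l + s k) ≤ s k / l :=
      div_le_div_of_nonneg_left (hspos k).le hl0 (by have := hspos k; linarith)
    have h2 : s k / l ≤ c₂ * ((k : ℝ) + 1) ^ (-(2 * r)) / l :=
      div_le_div_of_nonneg_right (hs k).2 hl0.le
    calc s k / (l + s k) ≤ s k / l := h1
      _ ≤ c₂ * ((k : ℝ) + 1) ^ (-(2 * r)) / l := h2
      _ = c₂ / l * ((k : ℝ) + 1) ^ (-(2 * r)) := by ring
  have hsumf : Summable (fun k : ℕ => s k / (l + s k)) :=
    Summable.of_nonneg_of_le hfnn hfle (hbase.mul_left (c₂ / l))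
  -- A and N
  set A : ℝ := l ^ (-(1 / (2 * r))) with hAdef
  have hA0 : 0 < A := Real.rpow_pos_of_pos hl0 _
  have hA1 : 1 ≤ A := Real.one_le_rpow_of_pos_of_le_one_of_nonpos hl0 hl1
    (by rw [neg_nonpos]; positivity)
  set N : ℕ := ⌊A⌋₊ with hNdef
  have hN1 : 1 ≤ N := Nat.le_floor (by exact_mod_cast hA1)
  have hNA : (N : ℝ) ≤ A := Nat.floor_le hA0.le
  have hNR1 : (1:ℝ) ≤ N := by exact_mod_cast hN1
  have hAN : A ≤ 2 * N := by
    have := Nat.lt_floor_add_one A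
    rw [← hNdef] at this
    linarith
  have hN0 : (0:ℝ) < N := by linarith
  clear_value q A N
  -- A ^ (-(2r)) = l
  have hAl : A ^ (-(2 * r)) = l := by
    rw [hAdef, ← Real.rpow_mul hl0.le]
    have : -(1 / (2 * r)) * -(2 * r) = 1 := by field_simp
    rw [this, Real.rpow_one]
  constructor
  · -- lower bound
    have hterm : ∀ k ∈ Finset.range N, c₁ / (1 + c₁) ≤ s k / (l + s k) := by
      intro k hk
      have hk1 : (k : ℝ) + 1 ≤ A := by
        have : (k : ℕ) + 1 ≤ N := Finset.mem_range.1 hk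
        have : ((k : ℕ) : ℝ) + 1 ≤ (N : ℝ) := by exact_mod_cast this
        linarith
      have h1 : A ^ (-(2 * r)) ≤ ((k : ℝ) + 1) ^ (-(2 * r)) :=
        Real.rpow_le_rpow_of_nonpos (by positivity) hk1 (by linarith)
      rw [hAl] at h1
      have h2 : c₁ * l ≤ s k := le_trans (by nlinarith) (hs k).1
      have h3 : c₁ * l / (l + c₁ * l) ≤ s k / (l + s k) := by
        rw [div_le_div_iff₀ (by nlinarith) (hden k)]
        nlinarith
      have h4 : c₁ * l / (l + c₁ * l) = c₁ / (1 + c₁) := by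
        rw [div_eq_div_iff (by nlinarith) (by positivity)]
        ring
      linarith [h3, h4.symm.le]
    have hsum1 : (N : ℝ) * (c₁ / (1 + c₁)) ≤ ∑ k ∈ Finset.range N, s k / (l + s k) := by
      have := Finset.sum_le_sum hterm
      simpa [Finset.sum_const, Finset.card_range, nsmul_eq_mul] using this
    have hsum2 : ∑ k ∈ Finset.range N, s k / (l + s k) ≤ ∑' k, s k / (l + s k) :=
      Summable.sum_le_tsum _ (fun i _ => hfnn i) hsumf
    have hfrac : (0:ℝ) ≤ c₁ / (1 + c₁) := by positivity
    calc c₁ / (2 * (1 + c₁)) * A = c₁ / (1 + c₁) * (A / 2) := by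
          have h1c : (1 + c₁) ≠ 0 := by positivity
          field_simp
      _ ≤ c₁ / (1 + c₁) * N := by
          apply mul_le_mul_of_nonneg_left _ hfrac
          linarith
      _ = (N : ℝ) * (c₁ / (1 + c₁)) := by ring
      _ ≤ ∑' k, s k / (l + s k) := hsum1.trans hsum2
  · -- upper bound
    have hsplit := Summable.sum_add_tsum_nat_add (f := fun k => s k / (l + s k)) N hsumf
    have hhead : ∑ k ∈ Finset.range N, s k / (l + s k) ≤ (N : ℝ) := by
      calc ∑ k ∈ Finset.range N, s k / (l + s k) ≤ ∑ k ∈ Finset.range N, (1:ℝ) :=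
            Finset.sum_le_sum fun i _ => hfle1 i
        _ = (N : ℝ) := by simp
    -- tail
    have hshift : Summable (fun i : ℕ => (c₂ / l) * ((i : ℝ) + N + 1) ^ (-(2 * r))) := by
      have h1 := (summable_nat_add_iff N).2 hbase
      exact (h1.congr fun n => by push_cast; ring_nf).mul_left (c₂ / l)
    have htail1 : (∑' i : ℕ, s (i + N) / (l + s (i + N))) ≤
        ∑' i : ℕ, (c₂ / l) * ((i : ℝ) + N + 1) ^ (-(2 * r)) := by
      refine Summable.tsum_le_tsum (fun i => ?_) ((summable_nat_add_iff N).2 hsumf) hshift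
      have := hfle (i + N)
      calc s (i + N) / (l + s (i + N)) ≤ c₂ / l * (((i + N : ℕ) : ℝ) + 1) ^ (-(2 * r)) := this
        _ = c₂ / l * ((i : ℝ) + N + 1) ^ (-(2 * r)) := by push_cast; ring_nf
    have htail2 : (∑' i : ℕ, (c₂ / l) * ((i : ℝ) + N + 1) ^ (-(2 * r))) ≤
        c₂ / l * ((N : ℝ) ^ (-q) / q) := by
      rw [tsum_mul_left]
      apply mul_le_mul_of_nonneg_left _ (by positivity)
      have h2 : (-(2 * r)) = -(q + 1) := by rw [hqdef]; ring
      have h3 := tr_aux2 hq N hN1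
      calc (∑' i : ℕ, ((i : ℝ) + N + 1) ^ (-(2 * r)))
          = ∑' i : ℕ, ((i : ℝ) + N + 1) ^ (-(q + 1)) := by rw [h2]
        _ ≤ (N : ℝ) ^ (-q) / q := h3
    -- bound N^{-q}
    have hNq : (N : ℝ) ^ (-q) ≤ A ^ (-q) * 2 ^ q := by
      have h1 : (N : ℝ) ^ (-q) ≤ (A / 2) ^ (-q) :=
        Real.rpow_le_rpow_of_nonpos (by positivity) (by linarith) (by linarith)
      have h2 : (A / 2) ^ (-q) = A ^ (-q) * 2 ^ q := by
        rw [Real.div_rpow hA0.le (by norm_num : (0:ℝ) ≤ 2), Real.rpow_neg (by norm_num : (0:ℝ) ≤ 2)]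
        field_simp
      linarith [h2 ▸ h1]
    have hAq : A ^ (-q) = l ^ (1 - 1 / (2 * r)) := by
      rw [hAdef, ← Real.rpow_mul hl0.le]
      congr 1
      rw [hqdef]; field_simp
    have hfinal : c₂ / l * ((N : ℝ) ^ (-q) / q) ≤ c₂ * 2 ^ q / q * A := by
      have hAA : A ^ (-q) * 2 ^ q / l = 2 ^ q * A := by
        have e : A ^ (-q) = A * l := by
          rw [hAq]
          have e2 : (1:ℝ) - 1 / (2 * r) = (-(1 / (2 * r))) + 1 := by ring
          rw [e2, Real.rpow_add hl0, Real.rpow_one, hAdef]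
        rw [e]
        field_simp
      have h1 : c₂ / l * ((N : ℝ) ^ (-q) / q) ≤ c₂ / l * (A ^ (-q) * 2 ^ q / q) := by
        apply mul_le_mul_of_nonneg_left _ (by positivity)
        apply div_le_div_of_nonneg_right hNq hq.le
      have h2 : c₂ / l * (A ^ (-q) * 2 ^ q / q) = c₂ / q * (A ^ (-q) * 2 ^ q / l) := by
        ring
      rw [h2, hAA] at h1
      calc c₂ / l * ((N : ℝ) ^ (-q) / q) ≤ c₂ / q * (2 ^ q * A) := h1
        _ = c₂ * 2 ^ q / q * A := by ring
    have := hsplit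
    calc (∑' k, s k / (l + s k))
        = ∑ k ∈ Finset.range N, s k / (l + s k) + ∑' i : ℕ, s (i + N) / (l + s (i + N)) :=
          hsplit.symm
      _ ≤ (N : ℝ) + c₂ / l * ((N : ℝ) ^ (-q) / q) := by
          have := htail1.trans htail2
          linarith
      _ ≤ A + c₂ * 2 ^ q / q * A := by linarith
      _ = (1 + c₂ * 2 ^ q / q) * A := by ring
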